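/- For three ancillae measuring an unprepared (maximally mixed) qudit via unitaries U^{(2)}, U^{(3)}, the joint density matrix ρ(A_1A_2A_3) = (1/d) Σ_{x_1} |x_1⟩⟨x_1| ⊗ Σ_{x_2,x_2'} U^{(2)}_{x_1x_2} U^{(2)*}_{x_1x_2'} |x_2⟩⟨x_2'| ⊗ Σ_{x_3} U^{(3)}_{x_2x_3} U^{(3)*}_{x_2'x_3} |x_3⟩⟨x_3| has von Neumann entropy equal to the Shannon entropy of p_{x_1x_3} = (1/d) Σ_{x_2} |U^{(2)}_{x_1x_2}|^2 |U^{(3)}_{x_2x_3}|^2, i.e. S(A_1A_2A_3) = S(A_1A_3). -/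

import Mathlib

open Matrix BigOperators

/-- Von Neumann entropy of a Hermitian matrix, via its eigenvalues (natural log). -/
noncomputable def vnEntropy {n : Type*} [Fintype n] [DecidableEq n]
    {ρ : Matrix n n ℂ} (h : ρ.IsHermitian) : ℝ :=
  -∑ i, h.eigenvalues i * Real.log (h.eigenvalues i)

/-- Shannon entropy of a probability vector (natural log). -/
noncomputable def shannonH {n : Type*} [Fintype n] (q : n → ℝ) : ℝ :=
  -∑ i, q i * Real.log (q i)

section helpers
open Polynomial

lemma my_charmatrix_diagonal {n : Type*} [Fintype n] [DecidableEq n] (q : n → ℂ) :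
    charmatrix (Matrix.diagonal q) = Matrix.diagonal (fun i => (X : ℂ[X]) - C (q i)) := by
  ext i j
  by_cases h : i = j
  · subst h; simp
  · simp [charmatrix_apply_ne _ _ _ h, Matrix.diagonal_apply_ne _ h]

lemma my_charpoly_diagonal {n : Type*} [Fintype n] [DecidableEq n] (q : n → ℂ) :
    (Matrix.diagonal q).charpoly = ∏ i, ((X : ℂ[X]) - C (q i)) := by
  rw [Matrix.charpoly, my_charmatrix_diagonal, Matrix.det_diagonal]

lemma my_charpoly_conj {n : Type*} [Fintype n] [DecidableEq n] (U A V : Matrix n n ℂ)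
    (hUV : U * V = 1) : (U * A * V).charpoly = A.charpoly := by
  have hcm : charmatrix (U * A * V)
      = (C : ℂ →+* ℂ[X]).mapMatrix U * charmatrix A * (C : ℂ →+* ℂ[X]).mapMatrix V := by
    have hUV' : (C : ℂ →+* ℂ[X]).mapMatrix U * (C : ℂ →+* ℂ[X]).mapMatrix V = 1 := by
      rw [← _root_.map_mul, hUV, RingHom.map_one]
    unfold charmatrix
    rw [mul_sub, sub_mul, ← _root_.map_mul, ← _root_.map_mul]
    congr 1
    have : Matrix.scalar n (X : ℂ[X]) = (X : ℂ[X]) • (1 : Matrix n n ℂ[X]) := by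
      ext i j; by_cases h : i = j <;> simp [Matrix.scalar_apply, Matrix.diagonal_apply, h,
        Matrix.one_apply, Matrix.smul_apply]
    rw [this, mul_smul_comm, smul_mul_assoc, mul_one, hUV']
  rw [Matrix.charpoly, Matrix.charpoly, hcm, Matrix.det_mul, Matrix.det_mul]
  have : ((C : ℂ →+* ℂ[X]).mapMatrix U).det * ((C : ℂ →+* ℂ[X]).mapMatrix V).det = 1 := by
    rw [← Matrix.det_mul, ← _root_.map_mul, hUV, RingHom.map_one, Matrix.det_one]
  calc ((C : ℂ →+* ℂ[X]).mapMatrix U).det * (charmatrix A).det * ((C : ℂ →+* ℂ[X]).mapMatrix V).det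
      = (charmatrix A).det * (((C : ℂ →+* ℂ[X]).mapMatrix U).det * ((C : ℂ →+* ℂ[X]).mapMatrix V).det) := by ring
    _ = (charmatrix A).det := by rw [this, mul_one]

lemma my_charpoly_hermitian {n : Type*} [Fintype n] [DecidableEq n] {A : Matrix n n ℂ}
    (hA : A.IsHermitian) :
    A.charpoly = ∏ i, ((X : ℂ[X]) - C (hA.eigenvalues i : ℂ)) := by
  conv_lhs => rw [hA.spectral_theorem, Unitary.conjStarAlgAut_apply]
  rw [my_charpoly_conj _ _ _ ((Matrix.mem_unitaryGroup_iff).mp (hA.eigenvectorUnitary).2),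
    my_charpoly_diagonal]
  rfl

lemma my_eval_charpoly {n : Type*} [Fintype n] [DecidableEq n] (M : Matrix n n ℂ) (z : ℂ) :
    (M.charpoly).eval z = (z • (1 : Matrix n n ℂ) - M).det := by
  rw [Matrix.charpoly, ← Polynomial.coe_evalRingHom, RingHom.map_det]
  congr 1
  ext i j
  by_cases h : i = j <;>
    simp [charmatrix_apply, Matrix.map_apply, h, Matrix.one_apply, Matrix.diagonal_apply,
      Matrix.sub_apply, Matrix.smul_apply]

lemma my_charpoly_rank_one {d : ℕ} (hd : 0 < d) (c : ℂ) (v : Fin d → ℂ) :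
    (Matrix.of fun i j => c * (v i * star (v j)) : Matrix (Fin d) (Fin d) ℂ).charpoly
      = X ^ (d - 1) * (X - C (c * ∑ i, star (v i) * v i)) := by
  set s : ℂ := c * ∑ i, star (v i) * v i with hs
  apply Polynomial.eq_of_infinite_eval_eq
  apply Set.Infinite.mono (s := {(0:ℂ)}ᶜ)
  swap
  · exact Set.Finite.infinite_compl (Set.finite_singleton 0)
  intro z hz
  simp only [Set.mem_compl_iff, Set.mem_singleton_iff] at hz
  simp only [Set.mem_setOf_eq]
  rw [my_eval_charpoly]
  have key : z • (1 : Matrix (Fin d) (Fin d) ℂ) - Matrix.of (fun i j => c * (v i * star (v j)))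
      = z • ((1 : Matrix (Fin d) (Fin d) ℂ)
          + Matrix.replicateCol Unit (fun i => (-(z⁻¹ * c)) * v i) * Matrix.replicateRow Unit (fun j => star (v j))) := by
    ext i j
    simp only [Matrix.sub_apply, Matrix.smul_apply, Matrix.add_apply, Matrix.of_apply,
      Matrix.mul_apply, Finset.univ_unique, Finset.sum_singleton, Matrix.replicateCol_apply,
      Matrix.replicateRow_apply, smul_eq_mul]
    field_simp
    ring
  rw [key, Matrix.det_smul, Matrix.det_one_add_replicateCol_mul_replicateRow, Fintype.card_fin]
  have hdot : (fun j => star (v j)) ⬝ᵥ (fun i => (-(z⁻¹ * c)) * v i)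
      = -(z⁻¹ * s) := by
    simp only [dotProduct]
    rw [hs, Finset.mul_sum, Finset.mul_sum, ← Finset.sum_neg_distrib]
    apply Finset.sum_congr rfl
    intro i _
    ring
  rw [hdot]
  have hzd : z ^ d = z ^ (d - 1) * z := by
    conv_lhs => rw [← Nat.sub_add_cancel hd]
    rw [pow_succ]
  rw [eval_mul, eval_pow, eval_X, eval_sub, eval_X, eval_C, hzd]
  field_simp
  ring

lemma my_charmatrix_blockDiagonal {o m : Type*} [Fintype o] [DecidableEq o] [Fintype m]
    [DecidableEq m] (M : o → Matrix m m ℂ) :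
    charmatrix (Matrix.blockDiagonal M) = Matrix.blockDiagonal (fun k => charmatrix (M k)) := by
  ext ⟨i, k⟩ ⟨j, k'⟩
  by_cases hk : k = k'
  · subst hk
    by_cases hij : i = j
    · subst hij; simp [Matrix.blockDiagonal_apply]
    · simp [charmatrix_apply, Matrix.blockDiagonal_apply, Matrix.diagonal_apply,
        Prod.ext_iff, hij]
  · simp [charmatrix_apply, Matrix.blockDiagonal_apply, Matrix.diagonal_apply,
      Prod.ext_iff, hk]

lemma my_charpoly_blockDiagonal {o m : Type*} [Fintype o] [DecidableEq o] [Fintype m]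
    [DecidableEq m] (M : o → Matrix m m ℂ) :
    (Matrix.blockDiagonal M).charpoly = ∏ k, (M k).charpoly := by
  rw [Matrix.charpoly, my_charmatrix_blockDiagonal, Matrix.det_blockDiagonal]
  rfl

lemma my_prod_msel {K : Type*} [Fintype K] (c : K → ℝ) :
    ∏ k : K, ((X : ℂ[X]) - C (c k : ℂ))
      = ((Multiset.map (fun k => ((c k : ℂ))) Finset.univ.val).map
          (fun r => (X : ℂ[X]) - C r)).prod := by
  rw [Multiset.map_map]
  rfl

lemma my_sum_transfer {I J : Type*} [Fintype I] [Fintype J] (a : I → ℝ) (b : J → ℝ)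
    (h : ∏ i, ((X : ℂ[X]) - C (a i : ℂ)) = ∏ j, ((X : ℂ[X]) - C (b j : ℂ)))
    (f : ℝ → ℝ) : ∑ i, f (a i) = ∑ j, f (b j) := by
  have key : Multiset.map (fun i => ((a i : ℂ))) Finset.univ.val
      = Multiset.map (fun j => ((b j : ℂ))) Finset.univ.val := by
    rw [my_prod_msel, my_prod_msel] at h
    have := congrArg Polynomial.roots h
    rwa [Polynomial.roots_multiset_prod_X_sub_C, Polynomial.roots_multiset_prod_X_sub_C] at this
  have key2 : Multiset.map a Finset.univ.val = Multiset.map b Finset.univ.val := by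
    apply Multiset.map_injective (f := (Complex.ofReal))
    · exact Complex.ofReal_injective
    · rw [Multiset.map_map, Multiset.map_map]
      exact key
  calc ∑ i, f (a i) = ((Multiset.map a Finset.univ.val).map f).sum := by
        rw [Multiset.map_map]; rfl
    _ = ((Multiset.map b Finset.univ.val).map f).sum := by rw [key2]
    _ = ∑ j, f (b j) := by rw [Multiset.map_map]; rfl

end helpers

section main
open Polynomial
def tripEquiv (d : ℕ) : (Fin d × Fin d × Fin d) ≃ (Fin d × (Fin d × Fin d)) :=
  ⟨fun x => (x.2.1, x.1, x.2.2), fun y => (y.2.1, y.1, y.2.2), fun _ => rfl, fun _ => rfl⟩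

lemma tripEquiv_symm_apply {d : ℕ} (b a c : Fin d) :
    (tripEquiv d).symm (b, a, c) = (a, b, c) := rfl

lemma star_self_eq_abs_sq (z : ℂ) : z * star z = ((‖z‖ ^ 2 : ℝ) : ℂ) := by
  rw [Complex.star_def, Complex.mul_conj, Complex.sq_norm]

theorem three_ancilla_entropy_on_boundary {d : ℕ} (hd : 0 < d)
    (U2 U3 : Matrix (Fin d) (Fin d) ℂ)
    (hU2 : U2 ∈ Matrix.unitaryGroup (Fin d) ℂ)
    (hU3 : U3 ∈ Matrix.unitaryGroup (Fin d) ℂ)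
    (ρ : Matrix (Fin d × Fin d × Fin d) (Fin d × Fin d × Fin d) ℂ)
    (hρdef : ρ = Matrix.of fun v w =>
      (if v.1 = w.1 then 1 else 0) * (if v.2.2 = w.2.2 then 1 else 0) *
        (1 / (d : ℂ)) *
        (U2 v.1 v.2.1 * star (U2 v.1 w.2.1) *
          (U3 v.2.1 v.2.2 * star (U3 w.2.1 v.2.2))))
    (hρ : ρ.IsHermitian)
    (ρ13 : Matrix (Fin d × Fin d) (Fin d × Fin d) ℂ)
    (hρ13def : ρ13 = Matrix.of fun a b => ∑ x2, ρ (a.1, x2, a.2) (b.1, x2, b.2))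
    (h13 : ρ13.IsHermitian) :
    vnEntropy hρ = vnEntropy h13 ∧
    vnEntropy hρ = shannonH (fun a : Fin d × Fin d =>
      (1 / d) * ∑ x2, ‖U2 a.1 x2‖ ^ 2 * ‖U3 x2 a.2‖ ^ 2) := by
  set p : Fin d × Fin d → ℝ := fun a =>
    (1 / d) * ∑ x2, ‖U2 a.1 x2‖ ^ 2 * ‖U3 x2 a.2‖ ^ 2 with hp
  set f : ℝ → ℝ := fun t => t * Real.log t with hf
  -- ρ13 is diagonal with entries p
  have hρ13diag : ρ13 = Matrix.diagonal (fun a => (p a : ℂ)) := by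
    rw [hρ13def, hρdef]
    ext ⟨a1, a3⟩ ⟨b1, b3⟩
    by_cases h1 : a1 = b1
    · by_cases h3 : a3 = b3
      · subst h1; subst h3
        simp only [Matrix.of_apply, Matrix.diagonal_apply_eq]
        have hps : ((p (a1, a3) : ℝ) : ℂ) = (1 / (d : ℂ)) *
            ∑ x2, ((‖U2 a1 x2‖ ^ 2 * ‖U3 x2 a3‖ ^ 2 : ℝ) : ℂ) := by
          simp only [hp]; push_cast; ring
        rw [hps, Finset.mul_sum]
        apply Finset.sum_congr rfl
        intro x2 _
        simp only [if_true]
        rw [star_self_eq_abs_sq (U2 a1 x2), star_self_eq_abs_sq (U3 x2 a3)]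
        push_cast
        ring
      · rw [Matrix.of_apply, Matrix.diagonal_apply_ne _ (by simp [Prod.ext_iff, h3])]
        apply Finset.sum_eq_zero
        intro x2 _
        simp [h3]
    · rw [Matrix.of_apply, Matrix.diagonal_apply_ne _ (by simp [Prod.ext_iff, h1])]
      apply Finset.sum_eq_zero
      intro x2 _
      simp [h1]
  -- eigenvalue-products
  have hchar13 : ρ13.charpoly = ∏ a : Fin d × Fin d, ((X : ℂ[X]) - C ((p a : ℝ) : ℂ)) := by
    rw [hρ13diag, my_charpoly_diagonal]
  -- block diagonal structure of ρ
  set pivot : Fin d := ⟨0, hd⟩ with hpiv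
  set qR : Fin d × Fin d × Fin d → ℝ := fun x =>
    if x.2.1 = pivot then p (x.1, x.2.2) else 0 with hqR
  have hcharρ : ρ.charpoly = ∏ x : Fin d × Fin d × Fin d, ((X : ℂ[X]) - C ((qR x : ℝ) : ℂ)) := by
    set B : Fin d × Fin d → Matrix (Fin d) (Fin d) ℂ := fun ac =>
      Matrix.of fun i j => (1 / (d : ℂ)) *
        ((U2 ac.1 i * U3 i ac.2) * star (U2 ac.1 j * U3 j ac.2)) with hB
    have hre : Matrix.reindex (tripEquiv d) (tripEquiv d) ρ = Matrix.blockDiagonal B := by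
      ext ⟨b, a, c⟩ ⟨b', a', c'⟩
      rw [hρdef]
      simp only [Matrix.reindex_apply, Matrix.submatrix_apply, tripEquiv_symm_apply,
        Matrix.of_apply, Matrix.blockDiagonal_apply, hB]
      by_cases ha : a = a'
      · by_cases hc : c = c'
        · subst ha; subst hc
          rw [if_pos rfl, if_pos rfl, if_pos rfl]
          simp only [Matrix.of_apply, star_mul']
          ring
        · rw [if_neg hc, if_neg (show ¬((a, c) = (a', c')) by simp [Prod.ext_iff, hc])]
          ring
      · rw [if_neg ha, if_neg (show ¬((a, c) = (a', c')) by simp [Prod.ext_iff, ha])]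
        ring
    have h1 : ρ.charpoly = ∏ ac : Fin d × Fin d, (B ac).charpoly := by
      rw [← Matrix.charpoly_reindex (tripEquiv d) ρ, hre, my_charpoly_blockDiagonal]
    have h2 : ∀ ac : Fin d × Fin d, (B ac).charpoly
        = X ^ (d - 1) * (X - C ((p ac : ℝ) : ℂ)) := by
      intro ac
      have hval : ((1 : ℂ) / (d : ℂ)) * ∑ b : Fin d,
          star ((fun i => U2 ac.1 i * U3 i ac.2) b) * ((fun i => U2 ac.1 i * U3 i ac.2) b)
          = ((p ac : ℝ) : ℂ) := by
        have hterm : ∀ b : Fin d, star (U2 ac.1 b * U3 b ac.2) * (U2 ac.1 b * U3 b ac.2)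
            = ((‖U2 ac.1 b‖ ^ 2 * ‖U3 b ac.2‖ ^ 2 : ℝ) : ℂ) := by
          intro b
          rw [show star (U2 ac.1 b * U3 b ac.2) * (U2 ac.1 b * U3 b ac.2)
            = (U2 ac.1 b * star (U2 ac.1 b)) * (U3 b ac.2 * star (U3 b ac.2)) by
              simp only [star_mul']; ring]
          rw [star_self_eq_abs_sq, star_self_eq_abs_sq]
          push_cast
          ring
        simp only []
        rw [Finset.sum_congr rfl (fun b _ => hterm b)]
        simp only [hp]
        push_cast
        ring
      rw [show B ac = (Matrix.of fun i j => (1 / (d : ℂ)) *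
          ((fun i => U2 ac.1 i * U3 i ac.2) i * star ((fun i => U2 ac.1 i * U3 i ac.2) j)))
          from rfl,
        my_charpoly_rank_one hd, hval]
    rw [h1, Finset.prod_congr rfl (fun ac _ => h2 ac)]
    have hsplit : ∀ t : ℂ, (∏ x2 : Fin d, if x2 = pivot then ((X : ℂ[X]) - C t) else (X : ℂ[X]))
        = (X - C t) * X ^ (d - 1) := by
      intro t
      rw [← Finset.mul_prod_erase Finset.univ _ (Finset.mem_univ pivot), if_pos rfl]
      congr 1
      rw [Finset.prod_congr rfl (fun x hx => if_neg (Finset.ne_of_mem_erase hx)),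
        Finset.prod_const, Finset.card_erase_of_mem (Finset.mem_univ pivot),
        Finset.card_univ, Fintype.card_fin]
    have hinner : ∀ a c : Fin d, (∏ x2 : Fin d, ((X : ℂ[X]) - C ((qR (a, x2, c) : ℝ) : ℂ)))
        = X ^ (d - 1) * (X - C ((p (a, c) : ℝ) : ℂ)) := by
      intro a c
      have hx2 : ∀ x2 : Fin d, ((X : ℂ[X]) - C ((qR (a, x2, c) : ℝ) : ℂ))
          = if x2 = pivot then ((X : ℂ[X]) - C ((p (a, c) : ℝ) : ℂ)) else (X : ℂ[X]) := by
        intro x2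
        by_cases hx : x2 = pivot
        · simp [hqR, hx]
        · simp [hqR, hx]
      rw [Finset.prod_congr rfl (fun x2 _ => hx2 x2), hsplit, mul_comm]
    calc ∏ ac : Fin d × Fin d, (X ^ (d - 1) * ((X : ℂ[X]) - C ((p ac : ℝ) : ℂ)))
        = ∏ a : Fin d, ∏ c : Fin d, (X ^ (d - 1) * ((X : ℂ[X]) - C ((p (a, c) : ℝ) : ℂ))) :=
          Fintype.prod_prod_type _
      _ = ∏ a : Fin d, ∏ c : Fin d, ∏ x2 : Fin d, ((X : ℂ[X]) - C ((qR (a, x2, c) : ℝ) : ℂ)) := by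
          apply Finset.prod_congr rfl; intro a _
          apply Finset.prod_congr rfl; intro c _
          rw [hinner]
      _ = ∏ a : Fin d, ∏ x2 : Fin d, ∏ c : Fin d, ((X : ℂ[X]) - C ((qR (a, x2, c) : ℝ) : ℂ)) := by
          apply Finset.prod_congr rfl; intro a _
          exact Finset.prod_comm
      _ = ∏ x : Fin d × Fin d × Fin d, ((X : ℂ[X]) - C ((qR x : ℝ) : ℂ)) := by
          rw [Fintype.prod_prod_type
            (f := fun x : Fin d × Fin d × Fin d => ((X : ℂ[X]) - C ((qR x : ℝ) : ℂ)))]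
          apply Finset.prod_congr rfl; intro a _
          rw [Fintype.prod_prod_type
            (f := fun y : Fin d × Fin d => ((X : ℂ[X]) - C ((qR (a, y) : ℝ) : ℂ)))]
  -- entropy computations
  have hS1 : vnEntropy hρ = -∑ x : Fin d × Fin d × Fin d, f (qR x) := by
    unfold vnEntropy
    rw [my_sum_transfer hρ.eigenvalues qR (by rw [← my_charpoly_hermitian hρ, hcharρ]) f]
  have hS2 : vnEntropy h13 = -∑ a : Fin d × Fin d, f (p a) := by
    unfold vnEntropy
    rw [my_sum_transfer h13.eigenvalues p (by rw [← my_charpoly_hermitian h13, hchar13]) f]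
  have hsum : ∑ x : Fin d × Fin d × Fin d, f (qR x) = ∑ a : Fin d × Fin d, f (p a) := by
    rw [Fintype.sum_prod_type]
    have : ∀ x1 : Fin d, ∑ y : Fin d × Fin d, f (qR (x1, y))
        = ∑ x3 : Fin d, f (p (x1, x3)) := by
      intro x1
      rw [Fintype.sum_prod_type, Finset.sum_comm]
      apply Finset.sum_congr rfl
      intro x3 _
      have : ∀ x2 : Fin d, f (qR (x1, x2, x3))
          = if x2 = pivot then f (p (x1, x3)) else 0 := by
        intro x2
        by_cases hx : x2 = pivot
        · simp [hqR, hx]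
        · simp [hqR, hx, hf]
      rw [Finset.sum_congr rfl (fun x2 _ => this x2), Finset.sum_ite_eq' Finset.univ pivot
        (fun _ => f (p (x1, x3)))]
      simp
    rw [Finset.sum_congr rfl (fun x1 _ => this x1)]
    exact (Fintype.sum_prod_type (f := fun a : Fin d × Fin d => f (p a))).symm
  constructor
  · rw [hS1, hS2, hsum]
  · rw [hS1, hsum]
    unfold shannonH
    rfl

end main
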